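/- Let 𝕜 be ℝ or ℂ, let X and Y be Banach 𝕜-spaces, and let u : X →L[𝕜] Y be an injective continuous linear operator. Then u is bounded below (there exists δ > 0 with ‖u x‖ ≥ δ‖x‖ for all x) if and only if for every Banach 𝕜-space G and every continuous linear map g : X →L[𝕜] G, the map j : G → (G × Y) ⧸ S, m ↦ class of (m, 0), is injective, where S is the closure in G × Y of the set { (g x, -u x) : x ∈ X }. (In other words, the universal monomorphisms in the category of Banach spaces are exactly the operators bounded below, which are exactly the strict monomorphisms; M_u = M_c in Ban.) -/

import Mathlib

universe u

/-- An injective continuous linear operator `u : X →L[𝕜] Y` of Banach spaces over `ℝ`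
or `ℂ` is bounded below if and only if for every Banach space `G` and continuous
linear `g : X →L[𝕜] G`, the pushout map `j : G → (G × Y) ⧸ S`, `m ↦ [(m, 0)]`
(`S` the closure of `{ (g x, -u x) | x ∈ X }`) is injective: the universal
monomorphisms in `Ban` are exactly the operators bounded below (`M_u = M_c`). -/
theorem universalMono_iff_boundedBelow_Banach {𝕜 : Type u} [RCLike 𝕜]
    {X Y : Type u} [NormedAddCommGroup X] [NormedSpace 𝕜 X] [CompleteSpace X]
    [NormedAddCommGroup Y] [NormedSpace 𝕜 Y] [CompleteSpace Y]
    (u : X →L[𝕜] Y) (hu : Function.Injective u) :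
    (∃ δ : ℝ, 0 < δ ∧ ∀ x : X, δ * ‖x‖ ≤ ‖u x‖) ↔
      ∀ (G : Type u) (_ : NormedAddCommGroup G) (_ : NormedSpace 𝕜 G)
        (_ : CompleteSpace G) (g : X →L[𝕜] G),
        Function.Injective (fun m : G =>
          Submodule.Quotient.mk
            (p := Submodule.topologicalClosure
              (LinearMap.range (LinearMap.prod g.toLinearMap (-u.toLinearMap))))
            (m, (0 : Y))) := by
  constructor
  · rintro ⟨δ, hδ, hbb⟩ G _ _ _ g m m' hmm'
    simp only [Submodule.Quotient.eq] at hmm'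
    have hmem : ((m - m', (0 : Y)) : G × Y) ∈
        closure ((LinearMap.range (LinearMap.prod g.toLinearMap (-u.toLinearMap)) :
          Submodule 𝕜 (G × Y)) : Set (G × Y)) := by
      rw [← Submodule.topologicalClosure_coe, SetLike.mem_coe]; simpa using hmm'
    rw [mem_closure_iff_seq_limit] at hmem
    obtain ⟨p, hp, hlim⟩ := hmem
    choose x hx using hp
    have hxp : ∀ n, p n = (g (x n), -u (x n)) := by
      intro n
      have := hx n
      simp only [LinearMap.prod_apply, Pi.prod, ContinuousLinearMap.coe_coe,
        LinearMap.neg_apply] at this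
      exact this.symm
    have hlim' : Filter.Tendsto (fun n => ((g (x n), -u (x n)) : G × Y))
        Filter.atTop (nhds (m - m', 0)) := by
      have : p = fun n => ((g (x n), -u (x n)) : G × Y) := funext hxp
      rwa [this] at hlim
    have h1 : Filter.Tendsto (fun n => g (x n)) Filter.atTop (nhds (m - m')) := by
      have := (continuous_fst.tendsto ((m - m', (0:Y)) : G × Y)).comp hlim'
      simpa [Function.comp_def] using this
    have h2 : Filter.Tendsto (fun n => u (x n)) Filter.atTop (nhds 0) := by
      have := (continuous_snd.tendsto ((m - m', (0:Y)) : G × Y)).comp hlim'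
      have h2' : Filter.Tendsto (fun n => -u (x n)) Filter.atTop (nhds 0) := by
        simpa [Function.comp_def] using this
      simpa using h2'.neg
    -- x n → 0 since bounded below
    have hx0 : Filter.Tendsto x Filter.atTop (nhds 0) := by
      rw [tendsto_zero_iff_norm_tendsto_zero]
      have hnorm : Filter.Tendsto (fun n => ‖u (x n)‖) Filter.atTop (nhds 0) := by
        simpa using h2.norm
      have hle : ∀ n, ‖x n‖ ≤ δ⁻¹ * ‖u (x n)‖ := fun n => by
        rw [le_inv_mul_iff₀ hδ]; exact hbb (x n)
      have : Filter.Tendsto (fun n => δ⁻¹ * ‖u (x n)‖) Filter.atTop (nhds 0) := by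
        simpa using hnorm.const_mul δ⁻¹
      exact squeeze_zero (fun n => norm_nonneg _) hle this
    have h3 : Filter.Tendsto (fun n => g (x n)) Filter.atTop (nhds 0) := by
      simpa [Function.comp_def] using (g.continuous.tendsto 0).comp hx0
    have : m - m' = 0 := tendsto_nhds_unique h1 h3
    exact sub_eq_zero.mp this
  · intro h
    -- Step 1: the "adjoint" T ψ = ψ ∘ u is surjective
    have hsurj : ∀ φ : X →L[𝕜] 𝕜, ∃ ψ : Y →L[𝕜] 𝕜, ψ.comp u = φ := by
      intro φ
      set S : Submodule 𝕜 (𝕜 × Y) := Submodule.topologicalClosure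
        (LinearMap.range (LinearMap.prod φ.toLinearMap (-u.toLinearMap))) with hS
      have hj := h 𝕜 inferInstance inferInstance inferInstance φ
      haveI : IsClosed (S : Set (𝕜 × Y)) := Submodule.isClosed_topologicalClosure _
      have h10 : ((1 : 𝕜), (0 : Y)) ∉ S := by
        intro hmem
        have : (Submodule.Quotient.mk (p := S) (((1 : 𝕜), (0 : Y)))) =
            (Submodule.Quotient.mk (p := S) (((0 : 𝕜), (0 : Y)))) := by
          rw [Submodule.Quotient.eq]; simpa using hmem
        exact one_ne_zero (hj this)
      have hv : (Submodule.Quotient.mk (p := S) (((1 : 𝕜), (0 : Y)))) ≠ 0 := by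
        simpa [Submodule.Quotient.mk_eq_zero] using h10
      obtain ⟨ψ₀, hψ₀norm, hψ₀⟩ := exists_dual_vector 𝕜 _ (norm_ne_zero_iff.mpr hv)
      -- F : (𝕜 × Y) →L[𝕜] 𝕜, F = ψ₀ ∘ mk
      let F : (𝕜 × Y) →L[𝕜] 𝕜 :=
        LinearMap.mkContinuous (ψ₀.toLinearMap.comp S.mkQ) ‖ψ₀‖ (fun z => by
          calc ‖ψ₀ (Submodule.Quotient.mk z)‖ ≤ ‖ψ₀‖ * ‖(Submodule.Quotient.mk z : _ ⧸ S)‖ :=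
                ψ₀.le_opNorm _
            _ ≤ ‖ψ₀‖ * ‖z‖ := by
                gcongr; exact Submodule.Quotient.norm_mk_le _ _)
      have hF : ∀ z : 𝕜 × Y, F z = ψ₀ (Submodule.Quotient.mk (p := S) z) := fun z => rfl
      have hFS : ∀ x : X, F (φ x, -u x) = 0 := by
        intro x
        rw [hF]
        have : ((φ x, -u x) : 𝕜 × Y) ∈ S := by
          apply Submodule.le_topologicalClosure
          exact ⟨x, rfl⟩
        rw [(Submodule.Quotient.mk_eq_zero S).mpr this, map_zero]
      set a : 𝕜 := F (1, 0) with ha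
      have ha0 : a ≠ 0 := by
        rw [ha, hF, hψ₀]
        simpa using hv
      refine ⟨a⁻¹ • (F.comp (ContinuousLinearMap.inr 𝕜 𝕜 Y)), ?_⟩
      ext x
      have key : φ x * a - F (0, u x) = 0 := by
        have := hFS x
        have hdecomp : ((φ x, -u x) : 𝕜 × Y) = (φ x) • ((1 : 𝕜), (0 : Y)) - (0, u x) := by
          simp
        rw [hdecomp, map_sub, map_smul, smul_eq_mul] at this
        simpa using this
      have hkey : F (0, u x) = φ x * a := (sub_eq_zero.mp key).symm
      simp only [ContinuousLinearMap.comp_apply, ContinuousLinearMap.smul_apply,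
        ContinuousLinearMap.coe_comp', Function.comp_apply, ContinuousLinearMap.inr_apply]
      rw [hkey, smul_eq_mul]
      field_simp
    -- Step 2: from surjectivity of the adjoint, get bounded below
    let T : (Y →L[𝕜] 𝕜) →L[𝕜] (X →L[𝕜] 𝕜) := (ContinuousLinearMap.compL 𝕜 X Y 𝕜).flip u
    have hT : Function.Surjective T := by
      intro φ
      obtain ⟨ψ, hψ⟩ := hsurj φ
      exact ⟨ψ, hψ⟩
    obtain ⟨C, hC, hCe⟩ := T.exists_preimage_norm_le hT
    refine ⟨C⁻¹, by positivity, fun x => ?_⟩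
    rcases eq_or_ne x 0 with rfl | hx
    · simp
    obtain ⟨φ, hφnorm, hφx⟩ := exists_dual_vector 𝕜 x (norm_ne_zero_iff.mpr hx)
    obtain ⟨ψ, hψ, hψnorm⟩ := hCe φ
    have h1 : ψ (u x) = (‖x‖ : 𝕜) := by
      have : T ψ = φ := hψ
      have := congrArg (fun f : X →L[𝕜] 𝕜 => f x) this
      simpa [T, ContinuousLinearMap.compL_apply, hφx] using this
    have h2 : ‖x‖ ≤ ‖ψ‖ * ‖u x‖ := by
      have := ψ.le_opNorm (u x)
      rw [h1] at this
      simpa using this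
    have h3 : ‖ψ‖ ≤ C := by
      simpa [hφnorm] using hψnorm
    rw [inv_mul_le_iff₀ hC]
    calc ‖x‖ ≤ ‖ψ‖ * ‖u x‖ := h2
      _ ≤ C * ‖u x‖ := by gcongr
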